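/- Let μ ∈ ℂ with Re μ > 0. The solution space of the singular ODE system A^d dv/dx = Gv on the half-line x > 0 that decays as x → +∞, where the finite generalized eigenvalues of (A^d, G) are ±μ, is one-dimensional whenever exactly one generalized eigenvalue has negative real part; the decaying solutions are exactly those of the form v(x) = e^{-μx} z where (G + μ A^d) z = 0. -/

import Mathlib

open Filter Matrix

-- derivative of real-to-complex exp
lemma hasDerivAt_cexp_real (c : ℂ) (x : ℝ) :
    HasDerivAt (fun t : ℝ => Complex.exp (c * t)) (Complex.exp (c * x) * c) x := by
  have h0 : HasDerivAt (fun t : ℝ => (t : ℂ)) 1 x := by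
    simpa using (hasDerivAt_id x).ofReal_comp
  simpa using (h0.const_mul c).cexp

-- decay of exp
lemma tendsto_cexp_neg (c : ℂ) (hc : 0 < c.re) :
    Tendsto (fun x : ℝ => Complex.exp (-c * x)) atTop (nhds 0) := by
  rw [tendsto_zero_iff_norm_tendsto_zero]
  have hn : ∀ x : ℝ, ‖Complex.exp (-c * x)‖ = Real.exp (-c.re * x) := by
    intro x
    rw [Complex.norm_exp]
    congr 1
    simp [Complex.mul_re]
  simp only [hn]
  exact Real.tendsto_exp_atBot.comp
    ((tendsto_const_mul_atBot_of_neg (by linarith : -c.re < 0)).mpr tendsto_id)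

-- scalar ODE on the half line
lemma scalar_ode (ν : ℂ) (f : ℝ → ℂ) (hf : Differentiable ℝ f)
    (h : ∀ x : ℝ, 0 < x → deriv f x = ν * f x) :
    ∀ x : ℝ, 0 < x → f x = Complex.exp (ν * (x - 1)) * f 1 := by
  set g : ℝ → ℂ := fun x => Complex.exp (-ν * x) * f x with hg
  have hgd : ∀ x : ℝ, 0 < x → HasDerivAt g 0 x := by
    intro x hx
    have h1 : HasDerivAt g
        (Complex.exp (-ν * x) * -ν * f x + Complex.exp (-ν * x) * deriv f x) x :=
      (hasDerivAt_cexp_real (-ν) x).mul ((hf x).hasDerivAt)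
    have h2 : Complex.exp (-ν * x) * -ν * f x + Complex.exp (-ν * x) * deriv f x = 0 := by
      rw [h x hx]; ring
    rw [h2] at h1; exact h1
  have hconst : ∀ x : ℝ, 0 < x → g x = g 1 := by
    intro x hx
    have hcv : Convex ℝ (Set.Ioi (0:ℝ)) := convex_Ioi 0
    refine hcv.is_const_of_fderivWithin_eq_zero
      (fun y hy => ((hgd y hy).differentiableAt.differentiableWithinAt)) ?_ hx (by norm_num)
    intro y hy
    rw [fderivWithin_of_isOpen isOpen_Ioi hy, (hgd y hy).hasFDerivAt.fderiv]
    ext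
    simp
  intro x hx
  have hc := hconst x hx
  have key : f x = Complex.exp (ν * x) * (Complex.exp (-ν * x) * f x) := by
    rw [← mul_assoc, ← Complex.exp_add]
    have : ν * (x:ℂ) + -ν * (x:ℂ) = 0 := by ring
    rw [this, Complex.exp_zero, one_mul]
  have hc' : Complex.exp (-ν * x) * f x = Complex.exp (-ν * ((1:ℝ):ℂ)) * f 1 := hc
  rw [key, hc']
  rw [← mul_assoc, ← Complex.exp_add]
  have harg : ν * (x:ℂ) + -ν * ((1:ℝ):ℂ) = ν * ((x:ℂ) - 1) := by push_cast; ring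
  rw [harg]

-- derivative of a pairing
lemma hasDerivAt_dot (u : Fin 3 → ℂ) (v : ℝ → Fin 3 → ℂ) (hv : Differentiable ℝ v) (x : ℝ) :
    HasDerivAt (fun t => u ⬝ᵥ v t) (u ⬝ᵥ deriv v x) x := by
  have hc := hasDerivAt_pi.mp (hv x).hasDerivAt
  simpa [dotProduct] using
    HasDerivAt.fun_sum (fun i (_ : i ∈ Finset.univ) => ((hc i).const_mul (u i)))

lemma tendsto_dot (u : Fin 3 → ℂ) (v : ℝ → Fin 3 → ℂ)
    (hv : Tendsto v atTop (nhds 0)) :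
    Tendsto (fun t => u ⬝ᵥ v t) atTop (nhds 0) := by
  have hcont : Continuous fun w : Fin 3 → ℂ => u ⬝ᵥ w := by
    simp only [dotProduct]
    exact continuous_finset_sum _ fun i _ => continuous_const.mul (continuous_apply i)
  have := (hcont.tendsto 0).comp hv
  simpa [Function.comp_def] using this

-- matrix whose columns are given vectors
noncomputable def colM (x y w : Fin 3 → ℂ) : Matrix (Fin 3) (Fin 3) ℂ :=
  (Matrix.of ![x, y, w])ᵀ

lemma mul_colM (M : Matrix (Fin 3) (Fin 3) ℂ) (x y w : Fin 3 → ℂ) :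
    M * colM x y w = colM (M.mulVec x) (M.mulVec y) (M.mulVec w) := by
  ext i j
  fin_cases j <;>
    simp [colM, Matrix.mul_apply, Matrix.mulVec, dotProduct, Matrix.vecHead, Matrix.vecTail, Function.comp]

lemma det_colM (x y w : Fin 3 → ℂ) :
    (colM x y w).det =
      x 0 * (y 1 * w 2) - x 0 * (y 2 * w 1) - x 1 * (y 0 * w 2)
        + x 1 * (y 2 * w 0) + x 2 * (y 0 * w 1) - x 2 * (y 1 * w 0) := by
  rw [colM, Matrix.det_transpose, Matrix.det_fin_three]
  simp [Matrix.of_apply]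
  ring

lemma colM_mulVec (x y w : Fin 3 → ℂ) (c : Fin 3 → ℂ) :
    (colM x y w).mulVec c = c 0 • x + c 1 • y + c 2 • w := by
  funext j
  simp [colM, Matrix.mulVec, dotProduct, Fin.sum_univ_three]
  ring

-- the kernel of G + μ A is one dimensional
lemma ker_pencil_dim_one (A G : Matrix (Fin 3) (Fin 3) ℂ) (hA : A.det = 0) (μ : ℂ)
    (hμ0 : μ ≠ 0) (hG : G.det ≠ 0) (hdetμ : (G - μ • A).det = 0)
    (z₀ z : Fin 3 → ℂ) (hz₀ : z₀ ≠ 0) (h0 : (G + μ • A).mulVec z₀ = 0)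
    (h1 : (G + μ • A).mulVec z = 0) : ∃ c : ℂ, z = c • z₀ := by
  by_contra hc
  push_neg at hc
  have hlt : Submodule.span ℂ ({z₀, z} : Set (Fin 3 → ℂ)) < ⊤ := by
    apply span_lt_top_of_card_lt_finrank
    have h2 : ({z₀, z} : Set (Fin 3 → ℂ)).toFinset.card ≤ 2 := by
      rw [Set.toFinset_insert, Set.toFinset_singleton]
      exact (Finset.card_insert_le _ _).trans (by simp)
    have hfr : Module.finrank ℂ (Fin 3 → ℂ) = 3 := Module.finrank_fin_fun ℂ
    omega
  obtain ⟨u, hu⟩ : ∃ u, u ∉ Submodule.span ℂ ({z₀, z} : Set (Fin 3 → ℂ)) := by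
    by_contra hall
    push_neg at hall
    exact hlt.ne (Submodule.eq_top_iff'.mpr hall)
  set P := colM z₀ z u with hP
  have hdP : P.det ≠ 0 := by
    intro hdp
    obtain ⟨c, hc0, hcv⟩ := (Matrix.exists_mulVec_eq_zero_iff.mpr hdp)
    rw [colM_mulVec] at hcv
    have hc2 : c 2 = 0 := by
      by_contra hc2
      apply hu
      set d := (c 2)⁻¹ with hdd
      have hd : d * c 2 = 1 := inv_mul_cancel₀ hc2
      have hurep : u = (-(d * c 0)) • z₀ + (-(d * c 1)) • z := by
        funext j
        have hj := congrFun hcv j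
        simp only [Pi.add_apply, Pi.smul_apply, Pi.zero_apply, smul_eq_mul] at hj ⊢
        linear_combination d * hj - u j * hd
      rw [hurep]
      exact Submodule.add_mem _
        (Submodule.smul_mem _ _ (Submodule.subset_span (by simp)))
        (Submodule.smul_mem _ _ (Submodule.subset_span (by simp)))
    have hc1 : c 1 = 0 := by
      by_contra hc1
      apply hc (-((c 1)⁻¹ * c 0))
      have he : (c 1)⁻¹ * c 1 = 1 := inv_mul_cancel₀ hc1
      funext j
      have hj := congrFun hcv j
      simp only [Pi.add_apply, Pi.smul_apply, Pi.zero_apply, smul_eq_mul, hc2,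
        zero_mul, add_zero] at hj ⊢
      linear_combination (c 1)⁻¹ * hj - z j * he
    have hc00 : c 0 = 0 := by
      have hz : c 0 • z₀ = 0 := by
        funext j
        have hj := congrFun hcv j
        simpa [hc1, hc2] using hj
      rcases smul_eq_zero.mp hz with h | h
      · exact h
      · exact absurd h hz₀
    exact hc0 (funext fun i => by fin_cases i <;> assumption)
  set a₀ := A.mulVec z₀ with ha₀
  set a₁ := A.mulVec z with ha₁
  set g := G.mulVec u with hgu
  set hh := A.mulVec u with hhu
  have hGz₀ : G.mulVec z₀ = -(μ • a₀) := by
    have h0' := h0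
    rw [Matrix.add_mulVec, Matrix.smul_mulVec] at h0'
    exact eq_neg_of_add_eq_zero_left h0'
  have hGz : G.mulVec z = -(μ • a₁) := by
    have h1' := h1
    rw [Matrix.add_mulVec, Matrix.smul_mulVec] at h1'
    exact eq_neg_of_add_eq_zero_left h1'
  have Dh : a₀ 0 * (a₁ 1 * hh 2) - a₀ 0 * (a₁ 2 * hh 1) - a₀ 1 * (a₁ 0 * hh 2)
      + a₀ 1 * (a₁ 2 * hh 0) + a₀ 2 * (a₁ 0 * hh 1) - a₀ 2 * (a₁ 1 * hh 0) = 0 := by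
    have hm : A * P = colM a₀ a₁ hh := mul_colM A z₀ z u
    have hd := congrArg Matrix.det hm
    rw [Matrix.det_mul, hA, zero_mul, det_colM] at hd
    exact hd.symm
  have Dmu : (colM ((G - μ • A).mulVec z₀) ((G - μ • A).mulVec z)
      ((G - μ • A).mulVec u)).det = 0 := by
    have hm := mul_colM (G - μ • A) z₀ z u
    have hd := congrArg Matrix.det hm
    rw [Matrix.det_mul, hdetμ, zero_mul] at hd
    exact hd.symm
  have hv₀ : (G - μ • A).mulVec z₀ = (-(2 * μ)) • a₀ := by
    rw [Matrix.sub_mulVec, Matrix.smul_mulVec, hGz₀, ← ha₀]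
    module
  have hv₁ : (G - μ • A).mulVec z = (-(2 * μ)) • a₁ := by
    rw [Matrix.sub_mulVec, Matrix.smul_mulVec, hGz, ← ha₁]
    module
  have hv₂ : (G - μ • A).mulVec u = g - μ • hh := by
    rw [Matrix.sub_mulVec, Matrix.smul_mulVec, ← hgu, ← hhu]
  rw [hv₀, hv₁, hv₂, det_colM] at Dmu
  simp only [Pi.smul_apply, Pi.sub_apply, smul_eq_mul] at Dmu
  have Dg4 : (4 * μ ^ 2) * (a₀ 0 * (a₁ 1 * g 2) - a₀ 0 * (a₁ 2 * g 1)
      - a₀ 1 * (a₁ 0 * g 2) + a₀ 1 * (a₁ 2 * g 0) + a₀ 2 * (a₁ 0 * g 1)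
      - a₀ 2 * (a₁ 1 * g 0)) = 0 := by
    linear_combination Dmu + (4 * μ ^ 3) * Dh
  have Dg : a₀ 0 * (a₁ 1 * g 2) - a₀ 0 * (a₁ 2 * g 1) - a₀ 1 * (a₁ 0 * g 2)
      + a₀ 1 * (a₁ 2 * g 0) + a₀ 2 * (a₁ 0 * g 1) - a₀ 2 * (a₁ 1 * g 0) = 0 := by
    rcases mul_eq_zero.mp Dg4 with h | h
    · exact absurd h (by simp [hμ0, pow_eq_zero_iff])
    · exact h
  have hfin : G.det * P.det = 0 := by
    have hm : G * P = colM (G.mulVec z₀) (G.mulVec z) g := mul_colM G z₀ z u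
    have hd := congrArg Matrix.det hm
    rw [Matrix.det_mul] at hd
    rw [hd, hGz₀, hGz, det_colM]
    simp only [Pi.neg_apply, Pi.smul_apply, smul_eq_mul]
    linear_combination μ ^ 2 * Dg
  exact (mul_ne_zero hG hdP) hfin

/-- Stable subspace of the singular ODE system `A^d v' = G v` on the half-line:
if the generalized eigenvalues of the pencil are exactly `±μ` with `Re μ > 0`
(so exactly one of them, `-μ`, has negative real part), then the decaying
solutions are precisely those of the form `v(x) = e^{-μx} z` with
`(G + μA^d)z = 0`, and this space of vectors `z` is one-dimensional. -/
theorem singular_ode_stable_subspace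
    (A G : Matrix (Fin 3) (Fin 3) ℂ) (hA : A.det = 0)
    (μ : ℂ) (hμ : 0 < μ.re)
    (hdet : ∀ lam : ℂ, (G - lam • A).det = 0 ↔ lam = μ ∨ lam = -μ) :
    (∀ v : ℝ → Fin 3 → ℂ, Differentiable ℝ v →
      (((∀ x : ℝ, 0 < x → A.mulVec (deriv v x) = G.mulVec (v x)) ∧
          Tendsto v atTop (nhds 0)) ↔
        (∃ z : Fin 3 → ℂ, (G + μ • A).mulVec z = 0 ∧
          ∀ x : ℝ, 0 < x → v x = Complex.exp (-μ * x) • z))) ∧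
    (∃ z₀ : Fin 3 → ℂ, z₀ ≠ 0 ∧ (G + μ • A).mulVec z₀ = 0 ∧
      ∀ z : Fin 3 → ℂ, (G + μ • A).mulVec z = 0 → ∃ c : ℂ, z = c • z₀) := by
  have hμ0 : μ ≠ 0 := by
    intro h
    rw [h] at hμ
    simp at hμ
  have hdG : G.det ≠ 0 := by
    intro h
    have h0 : (G - (0:ℂ) • A).det = 0 := by simpa using h
    rcases (hdet 0).mp h0 with h' | h'
    · exact hμ0 h'.symm
    · exact hμ0 (neg_eq_zero.mp h'.symm)
  have hdetμ : (G - μ • A).det = 0 := (hdet μ).mpr (Or.inl rfl)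
  have hGpA : G - (-μ) • A = G + μ • A := by rw [neg_smul, sub_neg_eq_add]
  have hdetnegμ : (G + μ • A).det = 0 := by
    rw [← hGpA]; exact (hdet (-μ)).mpr (Or.inr rfl)
  -- left null vectors / functionals
  obtain ⟨ψ₀, hψ₀ne, hψ₀⟩ : ∃ ψ ≠ 0, Aᵀ.mulVec ψ = 0 :=
    Matrix.exists_mulVec_eq_zero_iff.mpr (by rwa [Matrix.det_transpose])
  have hfun : ∀ ν : ℂ, ν ≠ 0 → (G - ν • A).det = 0 →
      ∃ ψ : Fin 3 → ℂ, Aᵀ.mulVec ψ ≠ 0 ∧ Gᵀ.mulVec ψ = ν • Aᵀ.mulVec ψ := by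
    intro ν hν hd
    have hdt : (Gᵀ - ν • Aᵀ).det = 0 := by
      rw [← Matrix.transpose_smul, ← Matrix.transpose_sub, Matrix.det_transpose]
      exact hd
    obtain ⟨ψ, hψne, hψ⟩ := Matrix.exists_mulVec_eq_zero_iff.mpr hdt
    rw [Matrix.sub_mulVec, Matrix.smul_mulVec, sub_eq_zero] at hψ
    refine ⟨ψ, ?_, hψ⟩
    intro h0
    apply hψne
    apply Matrix.eq_zero_of_mulVec_eq_zero (by rwa [Matrix.det_transpose] : Gᵀ.det ≠ 0)
    rw [hψ, h0, smul_zero]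
  obtain ⟨psip, hupne, hGpsip⟩ := hfun μ hμ0 hdetμ
  obtain ⟨psim, humne, hGpsim⟩ := hfun (-μ) (neg_ne_zero.mpr hμ0) (hGpA ▸ hdetnegμ)
  set u₀ : Fin 3 → ℂ := Gᵀ.mulVec ψ₀ with hu₀def
  set up : Fin 3 → ℂ := Aᵀ.mulVec psip with hupdef
  set um : Fin 3 → ℂ := Aᵀ.mulVec psim with humdef
  have hu₀ne : u₀ ≠ 0 := by
    intro h
    exact hψ₀ne (Matrix.eq_zero_of_mulVec_eq_zero
      (by rwa [Matrix.det_transpose] : Gᵀ.det ≠ 0) h)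
  set Q : Matrix (Fin 3) (Fin 3) ℂ := Matrix.of ![u₀, up, um] with hQdef
  have hQapp : ∀ w : Fin 3 → ℂ, Q.mulVec w = ![u₀ ⬝ᵥ w, up ⬝ᵥ w, um ⬝ᵥ w] := by
    intro w
    funext i
    fin_cases i <;> simp [hQdef, Matrix.mulVec]
  -- Q is invertible
  have hdQ : Q.det ≠ 0 := by
    intro hq
    have hQt : (Qᵀ).det = 0 := by rwa [Matrix.det_transpose]
    obtain ⟨c, hc0, hcv⟩ := Matrix.exists_mulVec_eq_zero_iff.mpr hQt
    have hsumv : c 0 • u₀ + c 1 • up + c 2 • um = 0 := by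
      funext j
      have hj := congrFun hcv j
      simp only [Matrix.mulVec, dotProduct, Fin.sum_univ_three,
        Matrix.transpose_apply, hQdef, Matrix.of_apply, Matrix.cons_val_zero,
        Matrix.cons_val_one, Matrix.head_cons, Matrix.cons_val_two,
        Matrix.tail_cons, Pi.zero_apply] at hj
      simp only [Pi.add_apply, Pi.smul_apply, Pi.zero_apply, smul_eq_mul]
      linear_combination hj
    -- apply C := Aᵀ (Gᵀ)⁻¹
    set C : Matrix (Fin 3) (Fin 3) ℂ := Aᵀ * (Gᵀ)⁻¹ with hCdef
    have hGTdet : IsUnit (Gᵀ).det := isUnit_iff_ne_zero.mpr (by rwa [Matrix.det_transpose])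
    have hCG : C * Gᵀ = Aᵀ := by
      rw [hCdef, Matrix.mul_assoc, Matrix.nonsing_inv_mul _ hGTdet, Matrix.mul_one]
    have key : ∀ ψ : Fin 3 → ℂ, C.mulVec (Gᵀ.mulVec ψ) = Aᵀ.mulVec ψ := by
      intro ψ
      rw [Matrix.mulVec_mulVec, hCG]
    have hCu₀ : C.mulVec u₀ = 0 := by rw [hu₀def, key, hψ₀]
    have hCup : C.mulVec up = μ⁻¹ • up := by
      have h1 : C.mulVec (μ • up) = up := by rw [← hGpsip, key]
      rw [Matrix.mulVec_smul] at h1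
      calc C.mulVec up = μ⁻¹ • (μ • C.mulVec up) := by
            rw [smul_smul, inv_mul_cancel₀ hμ0, one_smul]
        _ = μ⁻¹ • up := by rw [h1]
    have hCum : C.mulVec um = -(μ⁻¹ • um) := by
      have h1 : C.mulVec ((-μ) • um) = um := by rw [← hGpsim, key]
      rw [Matrix.mulVec_smul] at h1
      calc C.mulVec um = (-μ)⁻¹ • ((-μ) • C.mulVec um) := by
            rw [smul_smul, inv_mul_cancel₀ (neg_ne_zero.mpr hμ0), one_smul]
        _ = (-μ)⁻¹ • um := by rw [h1]
        _ = -(μ⁻¹ • um) := by rw [inv_neg, neg_smul]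
    have h2v : (c 1 * μ⁻¹) • up - (c 2 * μ⁻¹) • um = 0 := by
      have h := congrArg (fun w => C.mulVec w) hsumv
      simp only [Matrix.mulVec_add, Matrix.mulVec_smul, hCu₀, hCup, hCum,
        smul_zero, zero_add, Matrix.mulVec_zero, smul_neg, smul_smul] at h
      funext j
      have hj := congrFun h j
      simp only [Pi.add_apply, Pi.neg_apply, Pi.smul_apply, Pi.zero_apply,
        Pi.sub_apply, smul_eq_mul] at hj ⊢
      linear_combination hj
    have h3v : (c 1 * μ⁻¹ * μ⁻¹) • up + (c 2 * μ⁻¹ * μ⁻¹) • um = 0 := by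
      have h := congrArg (fun w => C.mulVec w) h2v
      simp only [Matrix.mulVec_sub, Matrix.mulVec_smul, hCup, hCum,
        Matrix.mulVec_zero, smul_neg, smul_smul, sub_neg_eq_add] at h
      funext j
      have hj := congrFun h j
      simp only [Pi.add_apply, Pi.smul_apply, Pi.zero_apply, smul_eq_mul] at hj ⊢
      linear_combination hj
    have hinv0 : μ⁻¹ ≠ 0 := inv_ne_zero hμ0
    have hc1 : c 1 = 0 := by
      have hz : (2 * (c 1 * (μ⁻¹ * μ⁻¹))) • up = 0 := by
        funext j
        have h2j := congrFun h2v j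
        have h3j := congrFun h3v j
        simp only [Pi.sub_apply, Pi.add_apply, Pi.smul_apply, Pi.zero_apply,
          smul_eq_mul] at h2j h3j ⊢
        linear_combination μ⁻¹ * h2j + h3j
      rcases smul_eq_zero.mp hz with h | h
      · simpa [mul_eq_zero, hinv0] using h
      · exact absurd h hupne
    have hc2 : c 2 = 0 := by
      have hz : (c 2 * μ⁻¹) • um = 0 := by
        funext j
        have h2j := congrFun h2v j
        simp only [Pi.sub_apply, Pi.smul_apply, Pi.zero_apply, smul_eq_mul,
          hc1, zero_mul] at h2j ⊢
        linear_combination -h2j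
      rcases smul_eq_zero.mp hz with h | h
      · rcases mul_eq_zero.mp h with h | h
        · exact h
        · exact absurd h hinv0
      · exact absurd h humne
    have hc00 : c 0 = 0 := by
      have hz : c 0 • u₀ = 0 := by
        funext j
        have hj := congrFun hsumv j
        simp only [Pi.add_apply, Pi.smul_apply, Pi.zero_apply, smul_eq_mul,
          hc1, hc2, zero_mul, add_zero] at hj ⊢
        linear_combination hj
      rcases smul_eq_zero.mp hz with h | h
      · exact h
      · exact absurd h hu₀ne
    exact hc0 (funext fun i => by fin_cases i <;> assumption)
  constructor
  · -- characterization of decaying solutions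
    intro v hv
    constructor
    · rintro ⟨hode, hdecay⟩
      have hkey : ∀ (ψ : Fin 3 → ℂ) (x : ℝ), 0 < x →
          (Aᵀ.mulVec ψ) ⬝ᵥ deriv v x = (Gᵀ.mulVec ψ) ⬝ᵥ v x := by
        intro ψ x hx
        rw [Matrix.mulVec_transpose, ← Matrix.dotProduct_mulVec, hode x hx,
          Matrix.dotProduct_mulVec, ← Matrix.mulVec_transpose]
      have hf₀ : ∀ x : ℝ, 0 < x → u₀ ⬝ᵥ v x = 0 := by
        intro x hx
        have h := hkey ψ₀ x hx
        rw [hψ₀, zero_dotProduct] at h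
        exact h.symm
      -- the forward functional vanishes identically
      have hode_dot : ∀ (ψ : Fin 3 → ℂ) (ν : ℂ), Gᵀ.mulVec ψ = ν • Aᵀ.mulVec ψ →
          ∀ x : ℝ, 0 < x →
          deriv (fun t => (Aᵀ.mulVec ψ) ⬝ᵥ v t) x = ν * ((Aᵀ.mulVec ψ) ⬝ᵥ v x) := by
        intro ψ ν hψ x hx
        rw [(hasDerivAt_dot (Aᵀ.mulVec ψ) v hv x).deriv, hkey ψ x hx, hψ,
          smul_dotProduct, smul_eq_mul]
      have hdiffdot : ∀ u : Fin 3 → ℂ, Differentiable ℝ (fun t => u ⬝ᵥ v t) :=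
        fun u x => (hasDerivAt_dot u v hv x).differentiableAt
      have hformp : ∀ x : ℝ, 0 < x →
          up ⬝ᵥ v x = Complex.exp (μ * (x - 1)) * (up ⬝ᵥ v 1) :=
        scalar_ode μ _ (hdiffdot up) (hode_dot psip μ hGpsip)
      have hformm : ∀ x : ℝ, 0 < x →
          um ⬝ᵥ v x = Complex.exp (-μ * (x - 1)) * (um ⬝ᵥ v 1) :=
        scalar_ode (-μ) _ (hdiffdot um) (hode_dot psim (-μ) hGpsim)
      have hfp1 : up ⬝ᵥ v 1 = 0 := by
        by_contra hne
        have hpos : (0:ℝ) < ‖up ⬝ᵥ v 1‖ := norm_pos_iff.mpr hne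
        have htend : Tendsto (fun t => ‖up ⬝ᵥ v t‖) atTop (nhds 0) := by
          have := (tendsto_dot up v hdecay).norm
          simpa using this
        have hev : ∀ᶠ x in atTop, ‖up ⬝ᵥ v x‖ < ‖up ⬝ᵥ v 1‖ :=
          htend.eventually_lt_const hpos
        obtain ⟨x, hx1, hxlt⟩ := ((eventually_ge_atTop (1:ℝ)).and hev).exists
        have hform := hformp x (by linarith)
        have hnorm : ‖up ⬝ᵥ v x‖ = Real.exp (μ.re * (x - 1)) * ‖up ⬝ᵥ v 1‖ := by
          rw [hform, norm_mul, Complex.norm_exp]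
          congr 2
          simp [Complex.mul_re, Complex.sub_re, Complex.sub_im]
        have hge : (1:ℝ) ≤ Real.exp (μ.re * (x - 1)) :=
          Real.one_le_exp (by nlinarith)
        nlinarith
      have hfp : ∀ x : ℝ, 0 < x → up ⬝ᵥ v x = 0 := by
        intro x hx
        rw [hformp x hx, hfp1, mul_zero]
      -- the solution formula
      have hform : ∀ x : ℝ, 0 < x →
          v x = Complex.exp (-μ * x) • (Complex.exp μ • v 1) := by
        intro x hx
        have hy : Q.mulVec (v x - Complex.exp (-μ * x) • (Complex.exp μ • v 1)) = 0 := by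
          rw [hQapp]
          have hc0' : u₀ ⬝ᵥ (v x - Complex.exp (-μ * x) • (Complex.exp μ • v 1)) = 0 := by
            rw [dotProduct_sub, dotProduct_smul,
              dotProduct_smul, hf₀ x hx, hf₀ 1 one_pos]
            simp
          have hc1' : up ⬝ᵥ (v x - Complex.exp (-μ * x) • (Complex.exp μ • v 1)) = 0 := by
            rw [dotProduct_sub, dotProduct_smul,
              dotProduct_smul, hfp x hx, hfp 1 one_pos]
            simp
          have hc2' : um ⬝ᵥ (v x - Complex.exp (-μ * x) • (Complex.exp μ • v 1)) = 0 := by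
            rw [dotProduct_sub, dotProduct_smul,
              dotProduct_smul, hformm x hx]
            simp only [smul_eq_mul]
            rw [show -μ * ((x:ℂ) - 1) = -μ * x + μ by ring, Complex.exp_add]
            ring
          funext i
          fin_cases i
          · exact hc0'
          · exact hc1'
          · exact hc2'
        have := Matrix.eq_zero_of_mulVec_eq_zero hdQ hy
        exact sub_eq_zero.mp this
      refine ⟨Complex.exp μ • v 1, ?_, hform⟩
      -- the vector is in the kernel of G + μA
      have hev : v =ᶠ[nhds (1:ℝ)]
          fun t => Complex.exp (-μ * t) • (Complex.exp μ • v 1) := by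
        filter_upwards [isOpen_Ioi.mem_nhds (show (1:ℝ) ∈ Set.Ioi 0 by norm_num)] with t ht
        exact hform t ht
      have hd1 : HasDerivAt (fun t : ℝ => Complex.exp (-μ * t) • (Complex.exp μ • v 1))
          ((Complex.exp (-μ * (1:ℝ)) * -μ) • (Complex.exp μ • v 1)) 1 :=
        (hasDerivAt_cexp_real (-μ) 1).smul_const _
      have hdv : deriv v 1 = (Complex.exp (-μ * (1:ℝ)) * -μ) • (Complex.exp μ • v 1) := by
        rw [hev.deriv_eq]
        exact hd1.deriv
      have hdv2 : deriv v 1 = (-μ) • v 1 := by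
        rw [hdv, smul_smul]
        congr 1
        have hE : Complex.exp (-μ * ((1:ℝ):ℂ)) * Complex.exp μ = 1 := by
          rw [← Complex.exp_add]
          push_cast
          norm_num
        linear_combination (-μ) * hE
      have heq := hode 1 one_pos
      rw [Matrix.add_mulVec, Matrix.smul_mulVec, Matrix.mulVec_smul,
        Matrix.mulVec_smul, ← heq, hdv2, Matrix.mulVec_smul]
      module
    · rintro ⟨z, hz, hform⟩
      have hGz : G.mulVec z = -(μ • A.mulVec z) := by
        have h := hz
        rw [Matrix.add_mulVec, Matrix.smul_mulVec] at h
        exact eq_neg_of_add_eq_zero_left h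
      constructor
      · intro x hx
        have hev : v =ᶠ[nhds x] fun t => Complex.exp (-μ * t) • z := by
          filter_upwards [isOpen_Ioi.mem_nhds hx] with t ht
          exact hform t ht
        have hd1 : HasDerivAt (fun t : ℝ => Complex.exp (-μ * t) • z)
            ((Complex.exp (-μ * x) * (-μ)) • z) x :=
          (hasDerivAt_cexp_real (-μ) x).smul_const z
        have hdv : deriv v x = (Complex.exp (-μ * x) * (-μ)) • z := by
          rw [hev.deriv_eq]
          exact hd1.deriv
        rw [hdv, hform x hx, Matrix.mulVec_smul, Matrix.mulVec_smul, hGz]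
        module
      · have h1 := (tendsto_cexp_neg μ hμ).smul_const z
        rw [zero_smul] at h1
        exact h1.congr' ((eventually_gt_atTop 0).mono fun x hx => (hform x hx).symm)
  · -- one-dimensionality
    obtain ⟨z₀, hz₀ne, hz₀⟩ : ∃ w ≠ 0, (G + μ • A).mulVec w = 0 :=
      Matrix.exists_mulVec_eq_zero_iff.mpr hdetnegμ
    exact ⟨z₀, hz₀ne, hz₀, fun z hzk =>
      ker_pencil_dim_one A G hA μ hμ0 hdG hdetμ z₀ z hz₀ne hz₀ hzk⟩
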